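/- Suppose for each agent i the local weights satisfy w_i > 0, and define V_i* = (α/w_i)·log(Σ_{a_i} μ_i(a_i)·exp((w_i/α)Q_i(a_i))). Then the joint value V_tot = Σ_i w_i V_i* + b satisfies V_tot = α·log(Σ_{a∈Aⁿ} μ_tot(a)·exp((Q_tot(a) − b)/α)) + b, where μ_tot(a) = Π_i μ_i(a_i) and Q_tot(a) = Σ_i w_i Q_i(a_i) + b. -/

import Mathlib

/-- Local soft-value computation is consistent with the global soft value
    under linear value decomposition. -/
theorem local_soft_values_consistent_with_global
    {A : Type*} [Fintype A] [Nonempty A] (n : ℕ)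
    (μi : Fin n → A → ℝ) (hμpos : ∀ i a, 0 < μi i a)
    (hμsum : ∀ i, ∑ a, μi i a = 1)
    (Qi : Fin n → A → ℝ)
    (w : Fin n → ℝ) (hw : ∀ i, 0 < w i) (b : ℝ)
    (α : ℝ) (hα : 0 < α)
    (Vi : Fin n → ℝ)
    (hVi : ∀ i, Vi i = (α / w i) *
      Real.log (∑ a, μi i a * Real.exp ((w i / α) * Qi i a)))
    (Vtot : ℝ) (hVtot : Vtot = ∑ i, w i * Vi i + b) :
    Vtot = α * Real.log (∑ a : Fin n → A,
      (∏ i, μi i (a i)) *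
        Real.exp (((∑ i, w i * Qi i (a i) + b) - b) / α)) + b := by
  set S : Fin n → ℝ := fun i => ∑ a, μi i a * Real.exp ((w i / α) * Qi i a) with hS
  have hSpos : ∀ i, 0 < S i := fun i =>
    Finset.sum_pos (fun a _ => mul_pos (hμpos i a) (Real.exp_pos _)) ⟨Classical.arbitrary A, Finset.mem_univ _⟩
  have hsum : (∑ a : Fin n → A,
      (∏ i, μi i (a i)) * Real.exp (((∑ i, w i * Qi i (a i) + b) - b) / α))
      = ∏ i, S i := by
    have h1 : ∀ a : Fin n → A,
        (∏ i, μi i (a i)) * Real.exp (((∑ i, w i * Qi i (a i) + b) - b) / α)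
        = ∏ i, μi i (a i) * Real.exp ((w i / α) * Qi i (a i)) := by
      intro a
      rw [add_sub_cancel_right, Finset.prod_mul_distrib, ← Real.exp_sum]
      congr 1
      rw [Finset.sum_div]
      exact congrArg Real.exp (Finset.sum_congr rfl fun i _ => by ring)
    rw [Finset.sum_congr rfl (fun a _ => h1 a), ← Fintype.piFinset_univ]
    exact (Finset.prod_univ_sum (fun _ => Finset.univ)
      (fun i x => μi i x * Real.exp (w i / α * Qi i x))).symm
  rw [hVtot, hsum, Real.log_prod (fun i _ => (hSpos i).ne'), Finset.mul_sum]
  congr 1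
  apply Finset.sum_congr rfl
  intro i _
  have hfold : (∑ a, μi i a * Real.exp ((w i / α) * Qi i a)) = S i := rfl
  rw [hVi i, hfold]
  field_simp
  exact mul_div_cancel_left₀ _ (hw i).ne'
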